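/- In the associative algebra A_0 generated over F_2[V_0, V_{N+1}] by idempotents I_1,...,I_N and elements U_1,...,U_N, s_1,...,s_N with the given multiplication rules, the element U_4 := Σ_{i=1}^N s_{ii} (where s_{ii} = s_i s_{i+1} ··· s_N s_1 ··· s_{i-1}, indices mod N) is central: U_4 commutes with every generator I_j, U_j, s_j. -/

import Mathlib

/-- The ground ring 𝔽₂[V₀, V_{N+1}], realized as polynomials in two variables over ℤ/2. -/
abbrev GroundRing := MvPolynomial (Fin 2) (ZMod 2)

/-- Generators of the associative algebra `A₀`: idempotents `I i`, and elements
`U i`, `s i`, for `i` ranging over `Fin N` (indices are taken mod `N`). -/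
inductive AGen (N : ℕ) : Type
  | I : Fin N → AGen N
  | U : Fin N → AGen N
  | s : Fin N → AGen N
deriving DecidableEq

variable (N : ℕ) [NeZero N]

open FreeAlgebra in
/-- The defining relations of `A₀` from the paper:
`I_i I_j = δ_{ij} I_i`; `I_j U_i = U_i I_j = δ_{ij} U_i`; `I_j s_i = δ_{ij} s_i`;
`s_i I_j = s_i` iff `j = i+1 (mod N)`; `U_i U_j = 0` for `i ≠ j`;
`U_i s_j = s_j U_i = 0`; `s_i s_j = 0` unless `j = i+1 (mod N)`. -/
inductive ARel : FreeAlgebra GroundRing (AGen N) → FreeAlgebra GroundRing (AGen N) → Prop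
  | II (i j : Fin N) : ARel (ι GroundRing (AGen.I i) * ι GroundRing (AGen.I j))
      (if i = j then ι GroundRing (AGen.I i) else 0)
  | IU (i j : Fin N) : ARel (ι GroundRing (AGen.I j) * ι GroundRing (AGen.U i))
      (if i = j then ι GroundRing (AGen.U i) else 0)
  | UI (i j : Fin N) : ARel (ι GroundRing (AGen.U i) * ι GroundRing (AGen.I j))
      (if i = j then ι GroundRing (AGen.U i) else 0)
  | Is (i j : Fin N) : ARel (ι GroundRing (AGen.I j) * ι GroundRing (AGen.s i))
      (if j = i then ι GroundRing (AGen.s i) else 0)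
  | sI (i j : Fin N) : ARel (ι GroundRing (AGen.s i) * ι GroundRing (AGen.I j))
      (if j = i + 1 then ι GroundRing (AGen.s i) else 0)
  | UU (i j : Fin N) : i ≠ j → ARel (ι GroundRing (AGen.U i) * ι GroundRing (AGen.U j)) 0
  | Us (i j : Fin N) : ARel (ι GroundRing (AGen.U i) * ι GroundRing (AGen.s j)) 0
  | sU (i j : Fin N) : ARel (ι GroundRing (AGen.s j) * ι GroundRing (AGen.U i)) 0
  | ss (i j : Fin N) : j ≠ i + 1 → ARel (ι GroundRing (AGen.s i) * ι GroundRing (AGen.s j)) 0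

/-- The associative algebra `A₀`, presented by the above generators and relations. -/
abbrev A0 := RingQuot (ARel N)

/-- The idempotent generator `I i` of `A₀`. -/
noncomputable def aI (i : Fin N) : A0 N :=
  RingQuot.mkAlgHom GroundRing (ARel N) (FreeAlgebra.ι GroundRing (AGen.I i))

/-- The generator `U i` of `A₀`. -/
noncomputable def aU (i : Fin N) : A0 N :=
  RingQuot.mkAlgHom GroundRing (ARel N) (FreeAlgebra.ι GroundRing (AGen.U i))

/-- The generator `s i` of `A₀`. -/
noncomputable def aS (i : Fin N) : A0 N :=
  RingQuot.mkAlgHom GroundRing (ARel N) (FreeAlgebra.ι GroundRing (AGen.s i))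

open Fin.NatCast in
/-- `s_{ii} = s_i s_{i+1} ⋯ s_{i-1}`, the full cyclic product of the `N` generators
`s_j` starting at index `i` (indices mod `N`). -/
noncomputable def scyc (i : Fin N) : A0 N :=
  ((List.range N).map (fun k => aS N (i + (k : Fin N)))).prod

section Aux
variable {N : ℕ} [NeZero N]
open Fin.NatCast

lemma rel_eq {a b : FreeAlgebra GroundRing (AGen N)} (h : ARel N a b) :
    RingQuot.mkAlgHom GroundRing (ARel N) a = RingQuot.mkAlgHom GroundRing (ARel N) b :=
  RingQuot.mkAlgHom_rel _ h

lemma aI_mul_aS (i j : Fin N) : aI N j * aS N i = if j = i then aS N i else 0 := by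
  unfold aI aS
  rw [← map_mul, rel_eq (ARel.Is i j)]
  split_ifs <;> simp

lemma aS_mul_aI (i j : Fin N) : aS N i * aI N j = if j = i + 1 then aS N i else 0 := by
  unfold aI aS
  rw [← map_mul, rel_eq (ARel.sI i j)]
  split_ifs <;> simp

lemma aU_mul_aS (i j : Fin N) : aU N i * aS N j = 0 := by
  unfold aU aS
  rw [← map_mul, rel_eq (ARel.Us i j)]
  simp

lemma aS_mul_aU (i j : Fin N) : aS N j * aU N i = 0 := by
  unfold aU aS
  rw [← map_mul, rel_eq (ARel.sU i j)]
  simp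

lemma aS_mul_aS (i j : Fin N) (h : j ≠ i + 1) : aS N i * aS N j = 0 := by
  unfold aS
  rw [← map_mul, rel_eq (ARel.ss i j h)]
  simp

/-- `chainS i n = s_i s_{i+1} ⋯ s_{i+n-1}`. -/
noncomputable def chainS (i : Fin N) (n : ℕ) : A0 N :=
  ((List.range n).map (fun k => aS N (i + (k : Fin N)))).prod

lemma scyc_eq (i : Fin N) : scyc N i = chainS i N := rfl

lemma chainS_succ (i : Fin N) (n : ℕ) :
    chainS i (n + 1) = chainS i n * aS N (i + (n : Fin N)) := by
  simp [chainS, List.range_succ]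

lemma chainS_succ' (i : Fin N) (n : ℕ) :
    chainS i (n + 1) = aS N i * chainS (i + 1) n := by
  induction n generalizing i with
  | zero => simp [chainS, List.range_succ]
  | succ n ih =>
      rw [chainS_succ i (n + 1), ih i, mul_assoc]
      conv_rhs => rw [chainS_succ]
      congr 3
      push_cast
      abel

lemma chainS_succ_mul_aI (i j : Fin N) (n : ℕ) :
    chainS i (n + 1) * aI N j = if j = i + (n : Fin N) + 1 then chainS i (n + 1) else 0 := by
  rw [chainS_succ, mul_assoc, aS_mul_aI]
  split_ifs with h
  · rfl
  · simp

lemma aI_mul_chainS_succ (i j : Fin N) (n : ℕ) :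
    aI N j * chainS i (n + 1) = if j = i then chainS i (n + 1) else 0 := by
  rw [chainS_succ', ← mul_assoc, aI_mul_aS]
  split_ifs with h
  · rfl
  · simp

lemma chainS_succ_mul_aU (i j : Fin N) (n : ℕ) : chainS i (n + 1) * aU N j = 0 := by
  rw [chainS_succ, mul_assoc, aS_mul_aU, mul_zero]

lemma aU_mul_chainS_succ (i j : Fin N) (n : ℕ) : aU N j * chainS i (n + 1) = 0 := by
  rw [chainS_succ', ← mul_assoc, aU_mul_aS, zero_mul]

lemma chainS_succ_mul_aS (i j : Fin N) (n : ℕ) (h : j ≠ i + (n : Fin N) + 1) :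
    chainS i (n + 1) * aS N j = 0 := by
  rw [chainS_succ, mul_assoc, aS_mul_aS _ _ h, mul_zero]

lemma aS_mul_chainS_succ (i j : Fin N) (n : ℕ) (h : i ≠ j + 1) :
    aS N j * chainS i (n + 1) = 0 := by
  rw [chainS_succ', ← mul_assoc, aS_mul_aS _ _ h, zero_mul]

lemma cast_pred (hN : 0 < N) : i + ((N - 1 : ℕ) : Fin N) + 1 = i := by
  have h : (((N - 1) + 1 : ℕ) : Fin N) = 0 := by
    rw [Nat.sub_add_cancel hN]; exact Fin.natCast_self N
  rw [Nat.cast_add, Nat.cast_one] at h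
  rw [add_assoc, h, add_zero]

end Aux

open Fin.NatCast in
/-- In the associative algebra `A₀` over 𝔽₂[V₀,V_{N+1}], the element
`U₄ := ∑_{i=1}^N s_{ii}` (where `s_{ii}` is the full cyclic product of the `s_j`
starting at `i`) is central: it commutes with every generator `I_j`, `U_j`, `s_j`. -/
theorem U4_is_central (hN : 2 < N) (j : Fin N) :
    (∑ i : Fin N, scyc N i) * aI N j = aI N j * (∑ i : Fin N, scyc N i) ∧
    (∑ i : Fin N, scyc N i) * aU N j = aU N j * (∑ i : Fin N, scyc N i) ∧
    (∑ i : Fin N, scyc N i) * aS N j = aS N j * (∑ i : Fin N, scyc N i) := by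
  have hN0 : 0 < N := by omega
  obtain ⟨m, hm⟩ : ∃ m, N = m + 1 := ⟨N - 1, by omega⟩
  have hcast : ∀ i : Fin N, i + ((m : ℕ) : Fin N) + 1 = i := by
    intro i
    have := cast_pred (N := N) (i := i) hN0
    rwa [show N - 1 = m by omega] at this
  have hcast0 : ((m + 1 : ℕ) : Fin N) = 0 := by rw [← hm]; exact Fin.natCast_self N
  have hsc : ∀ i : Fin N, scyc N i = chainS i (m + 1) := fun i => congrArg (chainS i) hm
  refine ⟨?_, ?_, ?_⟩
  · have h1 : ∀ i : Fin N, scyc N i * aI N j = if j = i then scyc N i else 0 := by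
      intro i
      rw [hsc, chainS_succ_mul_aI]
      simp only [hcast]
    have h2 : ∀ i : Fin N, aI N j * scyc N i = if j = i then scyc N i else 0 := by
      intro i
      rw [hsc, aI_mul_chainS_succ]
    rw [Finset.sum_mul, Finset.mul_sum]
    simp only [h1, h2]
  · rw [Finset.sum_mul, Finset.mul_sum]
    simp only [hsc, chainS_succ_mul_aU, aU_mul_chainS_succ, Finset.sum_const_zero]
  · have h1 : ∀ i : Fin N, scyc N i * aS N j = if j = i then chainS j (m + 2) else 0 := by
      intro i
      rw [hsc]
      split_ifs with h
      · subst h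
        have : chainS j (m + 2) = chainS j (m + 1) * aS N (j + ((m + 1 : ℕ) : Fin N)) :=
          chainS_succ j (m + 1)
        rw [this, hcast0, add_zero]
      · exact chainS_succ_mul_aS _ _ _ (by rw [hcast]; exact h)
    have h2 : ∀ i : Fin N, aS N j * scyc N i = if i = j + 1 then chainS j (m + 2) else 0 := by
      intro i
      rw [hsc]
      split_ifs with h
      · subst h
        exact (chainS_succ' j (m + 1)).symm
      · exact aS_mul_chainS_succ _ _ _ h
    rw [Finset.sum_mul, Finset.mul_sum]
    simp only [h1, h2]
    rw [Finset.sum_ite_eq, Finset.sum_ite_eq']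
    simp
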